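/- Let G = (V,E) be a finite connected simple graph and let w₁, w₂ : E → ℝ be injective edge-weight functions with w₁(e) ≤ w₂(e) for all e ∈ E; let E⁺ = { e ∈ E : w₂(e) > w₁(e) }. Let T₁ be a minimum-weight spanning tree of G with respect to w₁ and set F = T₁ \ E⁺ (a forest). Let A* ⊆ E be a set of edges such that F ∪ A* is a spanning tree of G and w₂(A*) ≤ w₂(A) for every A ⊆ E such that F ∪ A is a spanning tree of G. Then F ∪ A* is a minimum-weight spanning tree of G with respect to w₂. -/

import Mathlib

/-- The edge set `S` is acyclic: the graph `(V, S)` contains no cycle. -/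
def EdgesAcyclic {V : Type*} (S : Finset (Sym2 V)) : Prop :=
  (SimpleGraph.fromEdgeSet (S : Set (Sym2 V))).IsAcyclic

/-- The edge set `S` spans a connected graph `(V, S)` on the whole vertex set. -/
def EdgesConnected {V : Type*} (S : Finset (Sym2 V)) : Prop :=
  (SimpleGraph.fromEdgeSet (S : Set (Sym2 V))).Connected

/-- `T` is a spanning tree of `G`: a subset of the edges of `G` such that the
subgraph `(V, T)` is connected and acyclic. -/
def IsSpanningTree {V : Type*} (G : SimpleGraph V) (T : Finset (Sym2 V)) : Prop :=
  (T : Set (Sym2 V)) ⊆ G.edgeSet ∧ EdgesConnected T ∧ EdgesAcyclic T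

/-- The weight of an edge set: `w(S) = ∑_{e ∈ S} w(e)`. -/
def wsum {V : Type*} (w : Sym2 V → ℝ) (S : Finset (Sym2 V)) : ℝ := ∑ e ∈ S, w e

/-- `T` is a minimum-weight spanning tree of `G` with respect to `w`. -/
def IsMST {V : Type*} (G : SimpleGraph V) (w : Sym2 V → ℝ) (T : Finset (Sym2 V)) : Prop :=
  IsSpanningTree G T ∧ ∀ T' : Finset (Sym2 V), IsSpanningTree G T' → wsum w T ≤ wsum w T'

open SimpleGraph

section Aux

variable {V : Type*}

/-- Acyclicity is antitone. -/
lemma acyclic_anti {G H : SimpleGraph V} (h : G ≤ H) (hH : H.IsAcyclic) : G.IsAcyclic := by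
  intro x c hc
  exact hH (c.mapLe h) (hc.mapLe h)

lemma reach_tri {s : Set (Sym2 V)} {a b : V} {x y : V}
    (w : (SimpleGraph.fromEdgeSet s).Walk x y) :
    (SimpleGraph.fromEdgeSet (s \ {s(a,b)})).Reachable x y ∨
    ((SimpleGraph.fromEdgeSet (s \ {s(a,b)})).Reachable x a ∧
      (SimpleGraph.fromEdgeSet (s \ {s(a,b)})).Reachable b y) ∨
    ((SimpleGraph.fromEdgeSet (s \ {s(a,b)})).Reachable x b ∧
      (SimpleGraph.fromEdgeSet (s \ {s(a,b)})).Reachable a y) := by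
  set K := SimpleGraph.fromEdgeSet (s \ {s(a,b)}) with hK
  induction w with
  | nil => exact Or.inl (Reachable.refl _)
  | @cons x z y h p ih =>
    rw [fromEdgeSet_adj] at h
    by_cases hxz : s(x, z) = s(a, b)
    · rw [Sym2.eq_iff] at hxz
      rcases hxz with ⟨hx, hz⟩ | ⟨hx, hz⟩
      · rw [hx]; rw [hz] at ih
        rcases ih with h1 | ⟨h1, h2⟩ | ⟨h1, h2⟩
        · exact Or.inr (Or.inl ⟨Reachable.refl _, h1⟩)
        · exact Or.inl (h1.symm.trans h2)
        · exact Or.inl h2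
      · rw [hx]; rw [hz] at ih
        rcases ih with h1 | ⟨h1, h2⟩ | ⟨h1, h2⟩
        · exact Or.inr (Or.inr ⟨Reachable.refl _, h1⟩)
        · exact Or.inl h2
        · exact Or.inl (h1.symm.trans h2)
    · have hadj : K.Adj x z := (fromEdgeSet_adj _).2 ⟨⟨h.1, hxz⟩, h.2⟩
      rcases ih with h1 | ⟨h1, h2⟩ | ⟨h1, h2⟩
      · exact Or.inl (hadj.reachable.trans h1)
      · exact Or.inr (Or.inl ⟨hadj.reachable.trans h1, h2⟩)
      · exact Or.inr (Or.inr ⟨hadj.reachable.trans h1, h2⟩)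

/-- Every vertex connected to `a` still reaches `a` or `b` after deleting the edge `s(a,b)`. -/
lemma reach_or {s : Set (Sym2 V)} {a b x : V}
    (w : (SimpleGraph.fromEdgeSet s).Walk x a) :
    (SimpleGraph.fromEdgeSet (s \ {s(a,b)})).Reachable x a ∨
    (SimpleGraph.fromEdgeSet (s \ {s(a,b)})).Reachable x b := by
  rcases reach_tri (a := a) (b := b) w with h1 | ⟨h1, h2⟩ | ⟨h1, h2⟩
  · exact Or.inl h1
  · exact Or.inl h1
  · exact Or.inr h1

/-- Adding an edge between two components of an acyclic graph keeps it acyclic. -/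
lemma acyclic_insert {s : Set (Sym2 V)} {u v : V}
    (hS : (SimpleGraph.fromEdgeSet s).IsAcyclic) (huv : u ≠ v)
    (hnr : ¬ (SimpleGraph.fromEdgeSet s).Reachable u v) :
    (SimpleGraph.fromEdgeSet (s ∪ {s(u,v)})).IsAcyclic := by
  intro x c hc
  have hbr : (SimpleGraph.fromEdgeSet (s ∪ {s(u,v)})).IsBridge s(u, v) := by
    rw [isBridge_iff]
    rw [deleteEdges_fromEdgeSet]
    intro hr
    exact hnr (hr.mono (fromEdgeSet_mono (by intro e he; exact he.1.resolve_right he.2)))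
  have hne := hbr.notMem_edges_of_isCycle hc
  have hsub : ∀ e, e ∈ c.edges → e ∈ (SimpleGraph.fromEdgeSet s).edgeSet := by
    intro e he
    have h1 := c.edges_subset_edgeSet he
    rw [edgeSet_fromEdgeSet] at h1 ⊢
    refine ⟨h1.1.resolve_right ?_, h1.2⟩
    intro h2
    exact hne (by rwa [Set.mem_singleton_iff.mp h2] at he)
  exact hS (c.transfer _ hsub) (hc.transfer hsub)

variable [DecidableEq V]

/-- The exchange lemma: removing `s(a,b)` from a spanning tree and adding back
an edge `s(u,v)` of `G` joining the two resulting components gives a spanning tree. -/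
lemma swap_spanning {G : SimpleGraph V} {T : Finset (Sym2 V)}
    (hT : IsSpanningTree G T) {a b u v : V}
    (hf : s(a,b) ∈ T) (he : s(u,v) ∈ G.edgeSet) (huv : u ≠ v)
    (hnr : ¬ (SimpleGraph.fromEdgeSet ((T : Set (Sym2 V)) \ {s(a,b)})).Reachable u v) :
    IsSpanningTree G ((T \ {s(a,b)}) ∪ {s(u,v)}) := by
  obtain ⟨hTsub, hTconn, hTacyc⟩ := hT
  rw [EdgesConnected, EdgesAcyclic] at *
  set K := SimpleGraph.fromEdgeSet ((T : Set (Sym2 V)) \ {s(a,b)}) with hKdef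
  set K' := SimpleGraph.fromEdgeSet (((T : Set (Sym2 V)) \ {s(a,b)}) ∪ {s(u,v)}) with hK'def
  have hcoe : (((T \ {s(a,b)}) ∪ {s(u,v)} : Finset (Sym2 V)) : Set (Sym2 V))
      = ((T : Set (Sym2 V)) \ {s(a,b)}) ∪ {s(u,v)} := by
    simp
  have hKle : K ≤ K' := fromEdgeSet_mono Set.subset_union_left
  have hall : ∀ x, K.Reachable x a ∨ K.Reachable x b :=
    fun x => reach_or (hTconn.preconnected x a).some
  have huvK' : K'.Adj u v := (fromEdgeSet_adj _).2 ⟨Or.inr rfl, huv⟩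
  have hab' : K'.Reachable a b := by
    rcases hall u with h1 | h1 <;> rcases hall v with h2 | h2
    · exact absurd (h1.trans h2.symm) hnr
    · exact (h1.symm.mono hKle).trans (huvK'.reachable.trans (h2.mono hKle))
    · exact (h2.symm.mono hKle).trans (huvK'.symm.reachable.trans (h1.mono hKle))
    · exact absurd (h1.trans h2.symm) hnr
  refine ⟨?_, ?_, ?_⟩
  · rw [hcoe]
    rintro x (⟨hx, -⟩ | hx)
    · exact hTsub hx
    · rwa [Set.mem_singleton_iff.mp hx]
  · rw [EdgesConnected, hcoe]
    have : Nonempty V := hTconn.nonempty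
    refine ⟨fun x y => ?_⟩
    have hx := hall x
    have hy := hall y
    rcases hx with hx | hx <;> rcases hy with hy | hy
    · exact (hx.mono hKle).trans (hy.mono hKle).symm
    · exact (hx.mono hKle).trans (hab'.trans (hy.mono hKle).symm)
    · exact (hx.mono hKle).trans (hab'.symm.trans (hy.mono hKle).symm)
    · exact (hx.mono hKle).trans (hy.mono hKle).symm
  · rw [EdgesAcyclic, hcoe]
    exact acyclic_insert (acyclic_anti (fromEdgeSet_mono Set.diff_subset) hTacyc) huv hnr

lemma wsum_swap (w : Sym2 V → ℝ) {T : Finset (Sym2 V)} {f e : Sym2 V}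
    (hf : f ∈ T) (he : e ∉ T) :
    wsum w ((T \ {f}) ∪ {e}) = wsum w T - w f + w e := by
  have hdisj : Disjoint (T \ {f}) ({e} : Finset (Sym2 V)) := by
    simp only [Finset.disjoint_singleton_right, Finset.mem_sdiff]
    exact fun h => he h.1
  have h1 : ∑ x ∈ T \ {f}, w x + ∑ x ∈ ({f} : Finset (Sym2 V)), w x = ∑ x ∈ T, w x :=
    Finset.sum_sdiff (Finset.singleton_subset_iff.2 hf)
  rw [wsum, wsum, Finset.sum_union hdisj, Finset.sum_singleton] at *
  linarith

/-- Key lemma: an edge of a `w₁`-MST whose weight does not increase lies in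
every `w₂`-MST. -/
lemma mem_MST₂ {G : SimpleGraph V} {w₁ w₂ : Sym2 V → ℝ}
    (hw₁ : Set.InjOn w₁ G.edgeSet)
    (hle : ∀ e ∈ G.edgeSet, w₁ e ≤ w₂ e)
    {T₁ T₂ : Finset (Sym2 V)} (hT₁ : IsMST G w₁ T₁) (hT₂ : IsMST G w₂ T₂)
    {u v : V} (huv : s(u,v) ∈ T₁) (heq : w₁ s(u,v) = w₂ s(u,v)) :
    s(u,v) ∈ T₂ := by
  have heG : s(u,v) ∈ G.edgeSet := hT₁.1.1 huv
  have hune : u ≠ v := ((mem_edgeSet _).mp heG).ne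
  by_contra heT₂
  set K₁ := SimpleGraph.fromEdgeSet ((T₁ : Set (Sym2 V)) \ {s(u,v)}) with hK₁def
  have hnr₁ : ¬ K₁.Reachable u v := by
    have hadj : (SimpleGraph.fromEdgeSet (T₁ : Set (Sym2 V))).Adj u v :=
      (fromEdgeSet_adj _).2 ⟨huv, hune⟩
    have hbr := isAcyclic_iff_forall_adj_isBridge.mp hT₁.1.2.2 hadj
    rw [isBridge_iff] at hbr
    have h2 := hbr
    rwa [deleteEdges_fromEdgeSet] at h2
  set S : Set V := {x | K₁.Reachable u x} with hSdef
  have hT₂conn : (SimpleGraph.fromEdgeSet (T₂ : Set (Sym2 V))).Connected := hT₂.1.2.1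
  obtain ⟨p0⟩ := hT₂conn.preconnected u v
  set p := p0.toPath with hpdef
  obtain ⟨d, hd, hda, hdb⟩ := (p : (SimpleGraph.fromEdgeSet (T₂ : Set (Sym2 V))).Walk u v)
    |>.exists_boundary_dart S (Reachable.refl u) hnr₁
  set a := d.fst
  set b := d.snd
  have hadj2 : (SimpleGraph.fromEdgeSet (T₂ : Set (Sym2 V))).Adj a b := d.adj
  have hab : a ≠ b := hadj2.ne
  have hfT₂ : s(a,b) ∈ T₂ := ((fromEdgeSet_adj _).1 hadj2).1
  have hfG : s(a,b) ∈ G.edgeSet := hT₂.1.1 hfT₂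
  have hfe : s(a,b) ≠ s(u,v) := fun h => heT₂ (h ▸ hfT₂)
  have hfT₁ : s(a,b) ∉ T₁ := by
    intro hmem
    have hadjK : K₁.Adj a b := (fromEdgeSet_adj _).2 ⟨⟨hmem, hfe⟩, hab⟩
    exact hdb (hda.trans hadjK.reachable)
  have hnrab : ¬ K₁.Reachable a b := fun h => hdb (hda.trans h)
  -- exchange in T₁
  have hsp₁ : IsSpanningTree G ((T₁ \ {s(u,v)}) ∪ {s(a,b)}) :=
    swap_spanning hT₁.1 huv hfG hab hnrab
  have hw1 := hT₁.2 _ hsp₁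
  rw [wsum_swap w₁ huv hfT₁] at hw1
  have hlt : w₁ s(u,v) < w₁ s(a,b) := by
    rcases lt_or_eq_of_le (by linarith : w₁ s(u,v) ≤ w₁ s(a,b)) with h | h
    · exact h
    · exact absurd (hw₁ heG hfG h) (fun hh => hfe hh.symm)
  -- f = s(a,b) separates u from v in T₂
  have hnr₂ : ¬ (SimpleGraph.fromEdgeSet ((T₂ : Set (Sym2 V)) \ {s(a,b)})).Reachable u v := by
    rintro ⟨q0⟩
    set q := q0.toPath with hqdef
    have hqe : ∀ x ∈ (q : (SimpleGraph.fromEdgeSet ((T₂ : Set (Sym2 V)) \ {s(a,b)})).Walk u v).edges,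
        x ∈ (SimpleGraph.fromEdgeSet (T₂ : Set (Sym2 V))).edgeSet := by
      intro x hx
      have h1 := Walk.edges_subset_edgeSet _ hx
      rw [edgeSet_fromEdgeSet] at h1 ⊢
      exact ⟨h1.1.1, h1.2⟩
    have hq'p : ((q : (SimpleGraph.fromEdgeSet ((T₂ : Set (Sym2 V)) \ {s(a,b)})).Walk u v).transfer
        _ hqe).IsPath := q.2.transfer hqe
    have hpu := isAcyclic_iff_path_unique.mp hT₂.1.2.2 p ⟨_, hq'p⟩
    have hfp : d.edge ∈ (p : (SimpleGraph.fromEdgeSet (T₂ : Set (Sym2 V))).Walk u v).edges :=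
      List.mem_map_of_mem (f := Dart.edge) hd
    rw [hpu] at hfp
    simp only [Walk.edges_transfer] at hfp
    have h2 := Walk.edges_subset_edgeSet _ hfp
    rw [edgeSet_fromEdgeSet] at h2
    apply h2.1.2
    show d.edge ∈ ({s(a,b)} : Set (Sym2 V))
    simp [Dart.edge, Sym2.mk, a, b]
  -- exchange in T₂
  have hsp₂ : IsSpanningTree G ((T₂ \ {s(a,b)}) ∪ {s(u,v)}) :=
    swap_spanning hT₂.1 hfT₂ heG hune hnr₂
  have hw2 := hT₂.2 _ hsp₂
  rw [wsum_swap w₂ hfT₂ heT₂] at hw2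
  have hle_f := hle _ hfG
  linarith

end Aux

/-- Let `w₁ ≤ w₂` be injective edge weights on a finite connected simple
graph, `E⁺ = { e : w₂(e) > w₁(e) }`, `T₁` an MST for `w₁`, `F = T₁ \ E⁺`. If `A*` is a
set of edges such that `F ∪ A*` is a spanning tree, of `w₂`-weight at most that of any
`A ⊆ E` with `F ∪ A` a spanning tree, then `F ∪ A*` is an MST for `w₂`. -/
theorem stmt_7 {V : Type*} [Fintype V] [DecidableEq V] (G : SimpleGraph V)
    (hG : G.Connected) (w₁ w₂ : Sym2 V → ℝ)
    (hw₁ : Set.InjOn w₁ G.edgeSet) (hw₂ : Set.InjOn w₂ G.edgeSet)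
    (hle : ∀ e ∈ G.edgeSet, w₁ e ≤ w₂ e)
    (Eplus : Finset (Sym2 V)) (hEp : ∀ e, e ∈ Eplus ↔ e ∈ G.edgeSet ∧ w₁ e < w₂ e)
    (T₁ : Finset (Sym2 V)) (hT₁ : IsMST G w₁ T₁)
    (Astar : Finset (Sym2 V)) (hAsub : (Astar : Set (Sym2 V)) ⊆ G.edgeSet)
    (hAst : IsSpanningTree G ((T₁ \ Eplus) ∪ Astar))
    (hAmin : ∀ A : Finset (Sym2 V), (A : Set (Sym2 V)) ⊆ G.edgeSet →
      IsSpanningTree G ((T₁ \ Eplus) ∪ A) → wsum w₂ Astar ≤ wsum w₂ A) :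
    IsMST G w₂ ((T₁ \ Eplus) ∪ Astar) := by
  classical
  -- existence of a `w₂`-MST
  obtain ⟨T₂, hT₂sp, hT₂min⟩ : ∃ T₂ : Finset (Sym2 V), IsSpanningTree G T₂ ∧
      ∀ T', IsSpanningTree G T' → wsum w₂ T₂ ≤ wsum w₂ T' := by
    have hfin : {T : Finset (Sym2 V) | IsSpanningTree G T}.Finite := Set.toFinite _
    have hne : hfin.toFinset.Nonempty :=
      ⟨(T₁ \ Eplus) ∪ Astar, by rw [Set.Finite.mem_toFinset]; exact hAst⟩
    obtain ⟨T₂, hT₂mem, hmin⟩ := Finset.exists_min_image hfin.toFinset (wsum w₂) hne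
    rw [Set.Finite.mem_toFinset] at hT₂mem
    exact ⟨T₂, hT₂mem, fun T' hT' => hmin T' (by rwa [Set.Finite.mem_toFinset])⟩
  have hT₂ : IsMST G w₂ T₂ := ⟨hT₂sp, hT₂min⟩
  set F := T₁ \ Eplus with hF
  have hFsub : F ⊆ T₂ := by
    intro e he
    have heT₁ : e ∈ T₁ := (Finset.mem_sdiff.mp he).1
    have heG : e ∈ G.edgeSet := hT₁.1.1 heT₁
    have heq : w₁ e = w₂ e := by
      have hnot := (Finset.mem_sdiff.mp he).2
      rcases lt_or_eq_of_le (hle e heG) with h | h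
      · exact absurd ((hEp e).2 ⟨heG, h⟩) hnot
      · exact h
    clear he heG
    revert heT₁ heq
    induction e using Sym2.ind with
    | _ u v => exact fun h1 h2 => mem_MST₂ hw₁ hle hT₁ hT₂ h1 h2
  refine ⟨hAst, fun T' hT' => ?_⟩
  set A : Finset (Sym2 V) := (T₂ \ F) ∪ (Astar ∩ F) with hA
  have hAsubE : (A : Set (Sym2 V)) ⊆ G.edgeSet := by
    intro x hx
    rw [Finset.mem_coe, hA, Finset.mem_union] at hx
    rcases hx with hx | hx
    · exact hT₂sp.1 (Finset.mem_sdiff.mp hx).1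
    · exact hAsub (Finset.mem_inter.mp hx).1
  have hFA : F ∪ A = T₂ := by
    rw [hA, ← Finset.union_assoc, Finset.union_sdiff_of_subset hFsub]
    exact Finset.union_eq_left.mpr fun x hx => hFsub (Finset.mem_inter.mp hx).2
  have hAmin' : wsum w₂ Astar ≤ wsum w₂ A := by
    refine hAmin A hAsubE ?_
    show IsSpanningTree G (F ∪ A)
    rw [hFA]; exact hT₂sp
  have hdisj1 : Disjoint (T₂ \ F) (Astar ∩ F) := by
    rw [Finset.disjoint_left]
    intro x hx hx'
    exact (Finset.mem_sdiff.mp hx).2 (Finset.mem_inter.mp hx').2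
  have hsA : wsum w₂ A = wsum w₂ (T₂ \ F) + wsum w₂ (Astar ∩ F) := by
    rw [hA, wsum, Finset.sum_union hdisj1]; rfl
  have hsT₂ : wsum w₂ (T₂ \ F) + wsum w₂ F = wsum w₂ T₂ := Finset.sum_sdiff hFsub
  have hsFA : wsum w₂ (F ∪ Astar) = wsum w₂ F + wsum w₂ (Astar \ F) := by
    rw [wsum, ← Finset.union_sdiff_self_eq_union, Finset.sum_union Finset.disjoint_sdiff]; rfl
  have hsAstar : wsum w₂ (Astar ∩ F) + wsum w₂ (Astar \ F) = wsum w₂ Astar := by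
    have h := Finset.sum_sdiff (f := w₂) (Finset.inter_subset_left (s₁ := Astar) (s₂ := F))
    rw [Finset.sdiff_inter_self_left] at h
    show wsum w₂ (Astar ∩ F) + wsum w₂ (Astar \ F) = wsum w₂ Astar
    rw [wsum, wsum, wsum]
    linarith
  have hlast := hT₂min T' hT'
  show wsum w₂ (F ∪ Astar) ≤ wsum w₂ T'
  linarith
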